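/- arXiv:2012.13887 — 2 statements merged into one kernel-verified Lean document; each statement's English description precedes it below -/
import Mathlib

section
/- Let α ∈ (0,2), β > 0, C₀ ∈ ℝ, and choose λ₀ ∈ (0,1] small enough that 2β/(2-α) + C₀ λ₀^{2-α} > 0. Define F(λ) := ∫_λ^{λ₀} μ^{-(α/2+1)} (2β/(2-α) + C₀ μ^{2-α})^{-1/2} dμ for λ ∈ (0, λ₀]. Then there are constants C > 0 and λ̄ ∈ (0, λ₀] such that for all λ ∈ (0, λ̄], |F(λ) − 2/(α λ^{α/2} √(2β/(2-α)))| ≤ C (λ^{-α/4} + λ^{2 - 3α/2}). -/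
open intervalIntegral

noncomputable section

set_option maxHeartbeats 1000000

lemma sqrt_sub_le (m x y : ℝ) (hm : 0 < m) (hx : m ≤ x) (hy : m ≤ y) :
    |Real.sqrt x - Real.sqrt y| ≤ |x - y| / (2 * Real.sqrt m) := by
  have hx0 : (0:ℝ) ≤ x := hm.le.trans hx
  have hy0 : (0:ℝ) ≤ y := hm.le.trans hy
  have hsm : 0 < Real.sqrt m := Real.sqrt_pos.2 hm
  have hsx : Real.sqrt m ≤ Real.sqrt x := Real.sqrt_le_sqrt hx
  have hsy : Real.sqrt m ≤ Real.sqrt y := Real.sqrt_le_sqrt hy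
  have key : (Real.sqrt x - Real.sqrt y) * (Real.sqrt x + Real.sqrt y) = x - y := by
    have h1 := Real.sq_sqrt hx0
    have h2 := Real.sq_sqrt hy0
    nlinarith [h1, h2]
  rw [le_div_iff₀ (by positivity : (0:ℝ) < 2 * Real.sqrt m)]
  calc |Real.sqrt x - Real.sqrt y| * (2 * Real.sqrt m)
      ≤ |Real.sqrt x - Real.sqrt y| * (Real.sqrt x + Real.sqrt y) := by
        apply mul_le_mul_of_nonneg_left (by linarith) (abs_nonneg _)
    _ = |(Real.sqrt x - Real.sqrt y) * (Real.sqrt x + Real.sqrt y)| := by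
        rw [abs_mul, abs_of_nonneg (by positivity : (0:ℝ) ≤ Real.sqrt x + Real.sqrt y)]
    _ = |x - y| := by rw [key]

lemma inv_sqrt_sub_le (m x y : ℝ) (hm : 0 < m) (hx : m ≤ x) (hy : m ≤ y) :
    |(Real.sqrt x)⁻¹ - (Real.sqrt y)⁻¹| ≤ |x - y| / (2 * m * Real.sqrt m) := by
  have hsx : 0 < Real.sqrt x := Real.sqrt_pos.2 (hm.trans_le hx)
  have hsy : 0 < Real.sqrt y := Real.sqrt_pos.2 (hm.trans_le hy)
  have hsm : 0 < Real.sqrt m := Real.sqrt_pos.2 hm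
  have hid : (Real.sqrt x)⁻¹ - (Real.sqrt y)⁻¹
      = (Real.sqrt y - Real.sqrt x) / (Real.sqrt x * Real.sqrt y) := by
    field_simp
  have hmle : m ≤ Real.sqrt x * Real.sqrt y := by
    have h1 : Real.sqrt m ≤ Real.sqrt x := Real.sqrt_le_sqrt hx
    have h2 : Real.sqrt m ≤ Real.sqrt y := Real.sqrt_le_sqrt hy
    calc m = Real.sqrt m * Real.sqrt m := (Real.mul_self_sqrt hm.le).symm
      _ ≤ Real.sqrt x * Real.sqrt y := by nlinarith
  rw [hid, abs_div, abs_mul, abs_of_pos hsx, abs_of_pos hsy]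
  have h1 : |Real.sqrt y - Real.sqrt x| ≤ |y - x| / (2 * Real.sqrt m) :=
    sqrt_sub_le m y x hm hy hx
  calc |Real.sqrt y - Real.sqrt x| / (Real.sqrt x * Real.sqrt y)
      ≤ (|y - x| / (2 * Real.sqrt m)) / m :=
        div_le_div₀ (by positivity) h1 hm hmle
    _ = |x - y| / (2 * m * Real.sqrt m) := by
        rw [abs_sub_comm, div_div]; ring_nf

/-- asymptotics of
F(λ) = ∫_λ^{λ₀} μ^{-(α/2+1)} (2β/(2-α)+C₀μ^{2-α})^{-1/2} dμ as λ ↘ 0: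
|F(λ) - 2/(αλ^{α/2}√(2β/(2-α)))| ≤ C(λ^{-α/4} + λ^{2-3α/2}) for small λ. -/
theorem stmt10 (α β C₀ lam₀ : ℝ) (hα : α ∈ Set.Ioo (0 : ℝ) 2) (hβ : 0 < β)
    (hlam₀ : lam₀ ∈ Set.Ioc (0 : ℝ) 1)
    (hpos : 0 < 2 * β / (2 - α) + C₀ * lam₀ ^ (2 - α)) :
    ∃ C > (0 : ℝ), ∃ lb ∈ Set.Ioc (0 : ℝ) lam₀, ∀ l ∈ Set.Ioc (0 : ℝ) lb,
      |(∫ μ in l..lam₀,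
          μ ^ (-(α / 2 + 1)) * (2 * β / (2 - α) + C₀ * μ ^ (2 - α)) ^ (-(1 / 2) : ℝ)) -
        2 / (α * l ^ (α / 2) * Real.sqrt (2 * β / (2 - α)))|
      ≤ C * (l ^ (-(α / 4)) + l ^ (2 - 3 * α / 2)) := by
  obtain ⟨hα0, hα2⟩ := hα
  obtain ⟨hL0, hL1⟩ := hlam₀
  set A : ℝ := 2 * β / (2 - α) with hAdef
  have hA : 0 < A := by
    apply div_pos (by linarith) (by linarith)
  set m : ℝ := min A (A + C₀ * lam₀ ^ (2 - α)) with hmdef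
  have hm : 0 < m := lt_min hA hpos
  have hsA : 0 < Real.sqrt A := Real.sqrt_pos.2 hA
  have hmA : m ≤ A := min_le_left _ _
  set p : ℝ := -(α / 2 + 1) with hpdef
  set b : ℝ := 1 - 3 * α / 2 with hbdef
  set K : ℝ := |C₀| / (2 * m * Real.sqrt m) with hKdef
  have hK0 : 0 ≤ K := by positivity
  set c₂ : ℝ := 2 * lam₀ ^ (-(α/2)) / (α * Real.sqrt A) with hc₂def
  have hc₂ : 0 < c₂ := by
    apply div_pos (by positivity) (by positivity)
  refine ⟨K * (4/α) + c₂ + 1, by positivity, lam₀, ⟨hL0, le_refl _⟩, ?_⟩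
  intro l hl
  obtain ⟨hl0, hlL⟩ := hl
  have hl1 : l ≤ 1 := hlL.trans hL1
  -- lower bound for G μ := A + C₀ μ^(2-α)
  have hG : ∀ μ : ℝ, 0 < μ → μ ≤ lam₀ → m ≤ A + C₀ * μ ^ (2 - α) := by
    intro μ hμ0 hmuL
    rcases le_or_gt 0 C₀ with hC | hC
    · have : 0 ≤ C₀ * μ ^ (2 - α) := mul_nonneg hC (Real.rpow_nonneg hμ0.le _)
      calc m ≤ A := hmA
        _ ≤ A + C₀ * μ ^ (2 - α) := by linarith
    · have h1 : μ ^ (2 - α) ≤ lam₀ ^ (2 - α) :=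
        Real.rpow_le_rpow hμ0.le hmuL (by linarith)
      have h2 : C₀ * lam₀ ^ (2 - α) ≤ C₀ * μ ^ (2 - α) :=
        mul_le_mul_of_nonpos_left h1 hC.le
      calc m ≤ A + C₀ * lam₀ ^ (2 - α) := min_le_right _ _
        _ ≤ A + C₀ * μ ^ (2 - α) := by linarith
  have huIcc : Set.uIcc l lam₀ = Set.Icc l lam₀ := Set.uIcc_of_le hlL
  -- continuity facts
  have hcont_pow : ∀ q : ℝ, ContinuousOn (fun μ : ℝ => μ ^ q) (Set.uIcc l lam₀) := by
    intro q
    apply ContinuousOn.rpow_const continuousOn_id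
    intro x hx
    rw [huIcc] at hx
    exact Or.inl (ne_of_gt (hl0.trans_le hx.1))
  have hi_pow : ∀ q : ℝ, IntervalIntegrable (fun μ : ℝ => μ ^ q) MeasureTheory.volume l lam₀ :=
    fun q => (hcont_pow q).intervalIntegrable
  have hGpos : ∀ x ∈ Set.uIcc l lam₀, 0 < A + C₀ * x ^ (2 - α) := by
    intro x hx
    rw [huIcc] at hx
    exact hm.trans_le (hG x (hl0.trans_le hx.1) hx.2)
  have hcontG : ContinuousOn (fun μ : ℝ => A + C₀ * μ ^ (2 - α)) (Set.uIcc l lam₀) :=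
    continuousOn_const.add (continuousOn_const.mul (hcont_pow _))
  have hcontInv : ContinuousOn (fun μ : ℝ => (Real.sqrt (A + C₀ * μ ^ (2 - α)))⁻¹)
      (Set.uIcc l lam₀) := by
    apply ContinuousOn.inv₀ (Real.continuous_sqrt.comp_continuousOn hcontG)
    intro x hx
    exact ne_of_gt (Real.sqrt_pos.2 (hGpos x hx))
  have hi₂ : IntervalIntegrable
      (fun μ : ℝ => μ ^ p * ((Real.sqrt (A + C₀ * μ ^ (2 - α)))⁻¹ - (Real.sqrt A)⁻¹))
      MeasureTheory.volume l lam₀ :=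
    ((hcont_pow p).mul (hcontInv.sub continuousOn_const)).intervalIntegrable
  -- rewrite the integrand
  have hstep1 : (∫ μ in l..lam₀,
        μ ^ (-(α / 2 + 1)) * (2 * β / (2 - α) + C₀ * μ ^ (2 - α)) ^ (-(1 / 2) : ℝ))
      = (∫ μ in l..lam₀, (μ ^ p * (Real.sqrt A)⁻¹
          + μ ^ p * ((Real.sqrt (A + C₀ * μ ^ (2 - α)))⁻¹ - (Real.sqrt A)⁻¹))) := by
    apply intervalIntegral.integral_congr
    intro x hx
    have hGx : 0 < A + C₀ * x ^ (2 - α) := hGpos x hx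
    have hq : (A + C₀ * x ^ (2 - α)) ^ (-(1 / 2) : ℝ)
        = (Real.sqrt (A + C₀ * x ^ (2 - α)))⁻¹ := by
      rw [Real.rpow_neg hGx.le, Real.sqrt_eq_rpow]
    show x ^ (-(α / 2 + 1)) * (A + C₀ * x ^ (2 - α)) ^ (-(1 / 2) : ℝ)
        = x ^ p * (Real.sqrt A)⁻¹
          + x ^ p * ((Real.sqrt (A + C₀ * x ^ (2 - α)))⁻¹ - (Real.sqrt A)⁻¹)
    rw [hq, hpdef]
    ring
  have hIp : (∫ μ in l..lam₀, μ ^ p)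
      = (lam₀ ^ (-(α/2)) - l ^ (-(α/2))) / (-(α/2)) := by
    have h0 : (0:ℝ) ∉ Set.uIcc l lam₀ := by
      rw [huIcc]; intro h; exact absurd h.1 (not_le.2 hl0)
    have := integral_rpow (a := l) (b := lam₀) (r := p)
      (Or.inr ⟨by rw [hpdef]; intro h; nlinarith [h], h0⟩)
    rw [this]
    have he : p + 1 = -(α/2) := by rw [hpdef]; ring
    rw [he]
  have hstep2 : (∫ μ in l..lam₀, (μ ^ p * (Real.sqrt A)⁻¹
          + μ ^ p * ((Real.sqrt (A + C₀ * μ ^ (2 - α)))⁻¹ - (Real.sqrt A)⁻¹)))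
      = (∫ μ in l..lam₀, μ ^ p) * (Real.sqrt A)⁻¹
        + ∫ μ in l..lam₀,
            μ ^ p * ((Real.sqrt (A + C₀ * μ ^ (2 - α)))⁻¹ - (Real.sqrt A)⁻¹) := by
    rw [intervalIntegral.integral_add ((hi_pow p).mul_const _) hi₂,
      intervalIntegral.integral_mul_const]
  set I₂ : ℝ := ∫ μ in l..lam₀,
      μ ^ p * ((Real.sqrt (A + C₀ * μ ^ (2 - α)))⁻¹ - (Real.sqrt A)⁻¹) with hI₂def
  -- constant part
  have hlpow : l ^ (-(α/2)) = (l ^ (α/2))⁻¹ := Real.rpow_neg hl0.le _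
  have hconst : (lam₀ ^ (-(α/2)) - l ^ (-(α/2))) / (-(α/2)) * (Real.sqrt A)⁻¹
      - 2 / (α * l ^ (α/2) * Real.sqrt A) = -c₂ := by
    have hlα : (0:ℝ) < l ^ (α/2) := Real.rpow_pos_of_pos hl0 _
    rw [hlpow, hc₂def]
    field_simp
    ring
  -- pointwise bound for the remainder integrand
  have hptw : ∀ x ∈ Set.uIcc l lam₀,
      ‖x ^ p * ((Real.sqrt (A + C₀ * x ^ (2 - α)))⁻¹ - (Real.sqrt A)⁻¹)‖ ≤ K * x ^ b := by
    intro x hx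
    rw [huIcc] at hx
    have hx0 : 0 < x := hl0.trans_le hx.1
    have hGx : m ≤ A + C₀ * x ^ (2 - α) := hG x hx0 hx.2
    have h1 : |(Real.sqrt (A + C₀ * x ^ (2 - α)))⁻¹ - (Real.sqrt A)⁻¹|
        ≤ |C₀| * x ^ (2 - α) / (2 * m * Real.sqrt m) := by
      have := inv_sqrt_sub_le m (A + C₀ * x ^ (2 - α)) A hm hGx hmA
      have he : |A + C₀ * x ^ (2 - α) - A| = |C₀| * x ^ (2 - α) := by
        rw [add_sub_cancel_left, abs_mul, abs_of_nonneg (Real.rpow_nonneg hx0.le _)]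
      rwa [he] at this
    have hxp : 0 < x ^ p := Real.rpow_pos_of_pos hx0 _
    calc ‖x ^ p * ((Real.sqrt (A + C₀ * x ^ (2 - α)))⁻¹ - (Real.sqrt A)⁻¹)‖
        = x ^ p * |(Real.sqrt (A + C₀ * x ^ (2 - α)))⁻¹ - (Real.sqrt A)⁻¹| := by
          rw [Real.norm_eq_abs, abs_mul, abs_of_pos hxp]
      _ ≤ x ^ p * (|C₀| * x ^ (2 - α) / (2 * m * Real.sqrt m)) :=
          mul_le_mul_of_nonneg_left h1 hxp.le
      _ = K * x ^ b := by
          rw [hKdef]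
          have : x ^ b = x ^ p * x ^ (2 - α) := by
            rw [← Real.rpow_add hx0, hbdef, hpdef]; ring_nf
          rw [this]; ring
  -- bound on J = ∫ μ^b
  have hJnonneg : 0 ≤ ∫ μ in l..lam₀, μ ^ b := by
    apply intervalIntegral.integral_nonneg hlL
    intro u hu
    exact Real.rpow_nonneg (hl0.trans_le hu.1).le _
  have hsum0 : (0:ℝ) ≤ l ^ (-(α/4)) + l ^ (2 - 3*α/2) := by positivity
  have hJ : (∫ μ in l..lam₀, μ ^ b) ≤ 4/α * (l ^ (-(α/4)) + l ^ (2 - 3*α/2)) := by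
    have h0 : (0:ℝ) ∉ Set.uIcc l lam₀ := by
      rw [huIcc]; intro h; exact absurd h.1 (not_le.2 hl0)
    rcases le_or_gt (b + 1) (-(α/4)) with hc | hc
    · have hbne : b ≠ -1 := by intro h; rw [h] at hc; norm_num at hc; linarith
      rw [integral_rpow (Or.inr ⟨hbne, h0⟩)]
      have he : b + 1 = 2 - 3*α/2 := by rw [hbdef]; ring
      have hLb : 0 ≤ lam₀ ^ (b+1) := Real.rpow_nonneg hL0.le _
      have hlb : 0 ≤ l ^ (b+1) := Real.rpow_nonneg hl0.le _
      have h2 : (lam₀ ^ (b+1) - l ^ (b+1)) / (b+1)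
          = (l ^ (b+1) - lam₀ ^ (b+1)) / (-(b+1)) := by
        rw [div_neg, ← neg_div, neg_sub]
      rw [h2]
      have h3 : (l ^ (b+1) - lam₀ ^ (b+1)) / (-(b+1)) ≤ l ^ (b+1) / (α/4) := by
        apply div_le_div₀ hlb (by linarith) (by linarith) (by linarith)
      calc (l ^ (b+1) - lam₀ ^ (b+1)) / (-(b+1)) ≤ l ^ (b+1) / (α/4) := h3
        _ = 4/α * l ^ (2 - 3*α/2) := by rw [he, div_div_eq_mul_div]; ring
        _ ≤ 4/α * (l ^ (-(α/4)) + l ^ (2 - 3*α/2)) := by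
            have : (0:ℝ) ≤ l ^ (-(α/4)) := Real.rpow_nonneg hl0.le _
            have h4 : (0:ℝ) < 4/α := by positivity
            nlinarith
    · have hq : (∫ μ in l..lam₀, μ ^ b) ≤ ∫ μ in l..lam₀, μ ^ (-(1 + α/4)) := by
        apply intervalIntegral.integral_mono_on hlL (hi_pow b) (hi_pow _)
        intro x hx
        have hx0 : 0 < x := hl0.trans_le hx.1
        have hx1 : x ≤ 1 := hx.2.trans hL1
        exact Real.rpow_le_rpow_of_exponent_ge hx0 hx1 (by linarith)
      have hqne : -(1 + α/4) ≠ -1 := by intro h; nlinarith [neg_injective h]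
      have heval : (∫ μ in l..lam₀, μ ^ (-(1 + α/4)))
          = (lam₀ ^ (-(α/4)) - l ^ (-(α/4))) / (-(α/4)) := by
        rw [integral_rpow (Or.inr ⟨hqne, h0⟩)]
        have he : -(1 + α/4) + 1 = -(α/4) := by ring
        rw [he]
      have hLb : 0 ≤ lam₀ ^ (-(α/4)) := Real.rpow_nonneg hL0.le _
      have h2 : (lam₀ ^ (-(α/4)) - l ^ (-(α/4))) / (-(α/4))
          = (l ^ (-(α/4)) - lam₀ ^ (-(α/4))) * (4/α) := by
        rw [div_neg, ← neg_div, neg_sub, div_div_eq_mul_div]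
        ring
      have h4 : (0:ℝ) < 4/α := by positivity
      have h5 : (0:ℝ) ≤ l ^ (2 - 3*α/2) := Real.rpow_nonneg hl0.le _
      calc (∫ μ in l..lam₀, μ ^ b) ≤ ∫ μ in l..lam₀, μ ^ (-(1 + α/4)) := hq
        _ = (l ^ (-(α/4)) - lam₀ ^ (-(α/4))) * (4/α) := by rw [heval, h2]
        _ ≤ 4/α * (l ^ (-(α/4)) + l ^ (2 - 3*α/2)) := by nlinarith
  -- bound |I₂|
  have hI₂bound : |I₂| ≤ K * (4/α) * (l ^ (-(α/4)) + l ^ (2 - 3*α/2)) := by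
    have hKint : IntervalIntegrable (fun μ : ℝ => K * μ ^ b) MeasureTheory.volume l lam₀ :=
      (hi_pow b).const_mul K
    have hae : ∀ᵐ t ∂(MeasureTheory.volume.restrict (Set.uIoc l lam₀)),
        ‖t ^ p * ((Real.sqrt (A + C₀ * t ^ (2 - α)))⁻¹ - (Real.sqrt A)⁻¹)‖ ≤ K * t ^ b := by
      filter_upwards [MeasureTheory.ae_restrict_mem measurableSet_uIoc] with t ht
      exact hptw t (Set.uIoc_subset_uIcc ht)
    have h1 := intervalIntegral.norm_integral_le_abs_of_norm_le hae hKint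
    rw [Real.norm_eq_abs] at h1
    have h2 : (∫ t in l..lam₀, K * t ^ b) = K * ∫ t in l..lam₀, t ^ b := by
      rw [intervalIntegral.integral_const_mul]
    calc |I₂| ≤ |∫ t in l..lam₀, K * t ^ b| := h1
      _ = K * ∫ t in l..lam₀, t ^ b := by
          rw [h2, abs_of_nonneg (mul_nonneg hK0 hJnonneg)]
      _ ≤ K * (4/α * (l ^ (-(α/4)) + l ^ (2 - 3*α/2))) :=
          mul_le_mul_of_nonneg_left hJ hK0
      _ = K * (4/α) * (l ^ (-(α/4)) + l ^ (2 - 3*α/2)) := by ring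
  -- assemble
  have hone : (1:ℝ) ≤ l ^ (-(α/4)) := by
    have := Real.rpow_le_rpow_of_exponent_ge hl0 hl1 (by linarith : -(α/4) ≤ 0)
    rwa [Real.rpow_zero] at this
  rw [hstep1, hstep2, hIp]
  have hfinal : (lam₀ ^ (-(α/2)) - l ^ (-(α/2))) / (-(α/2)) * (Real.sqrt A)⁻¹ + I₂
      - 2 / (α * l ^ (α/2) * Real.sqrt A) = I₂ - c₂ := by
    have := hconst
    linarith
  rw [hfinal]
  calc |I₂ - c₂| ≤ |I₂| + c₂ := by
        have := abs_sub_abs_le_abs_sub I₂ c₂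
        have h := abs_sub I₂ c₂
        calc |I₂ - c₂| ≤ |I₂| + |c₂| := abs_sub I₂ c₂
          _ = |I₂| + c₂ := by rw [abs_of_pos hc₂]
    _ ≤ K * (4/α) * (l ^ (-(α/4)) + l ^ (2 - 3*α/2))
        + c₂ * (l ^ (-(α/4)) + l ^ (2 - 3*α/2)) := by
        have h1 : c₂ ≤ c₂ * (l ^ (-(α/4)) + l ^ (2 - 3*α/2)) := by
          have h5 : (0:ℝ) ≤ l ^ (2 - 3*α/2) := Real.rpow_nonneg hl0.le _
          nlinarith
        linarith [hI₂bound]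
    _ ≤ (K * (4/α) + c₂ + 1) * (l ^ (-(α/4)) + l ^ (2 - 3*α/2)) := by nlinarith
  done
end
end

section
/- Let N ≥ 4 and F(z) := (1/(2+4/N))|z|^{2+4/N}. For all P, ε ∈ ℂ, the pointwise estimate |F(P+ε) − F(P) − dF(P)(ε) − ½d²F(P)(ε,ε)| ≲ |ε|^{4/N+2} + |P|^{4/N−1}|ε|³·𝟙_{2|ε|<|P|} holds; in particular when 2|ε| ≥ |P| the left side is bounded by C|ε|^{4/N+2}, and when 2|ε| < |P| it is bounded by C|P|^{4/N−1}|ε|³ ≤ C'|ε|^{4/N+2}. -/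
noncomputable section

/-- F(z) = |z|^{2+4/N}/(2+4/N). -/
def FNL (N : ℕ) (z : ℂ) : ℝ := ‖z‖ ^ (2 + (4 : ℝ) / N) / (2 + (4 : ℝ) / N)


open Real Set Filter Asymptotics


local notation "⟪" x ", " y "⟫" => @inner ℝ ℂ _ x y


lemma hasFDerivAt_Fp {p : ℝ} (hp : 1 < p) (z : ℂ) :
    HasFDerivAt (fun z : ℂ => ‖z‖ ^ p / p) ((‖z‖ ^ (p - 2)) • innerSL ℝ z) z := by
  have hp0 : p ≠ 0 := by positivity
  have h := (hasFDerivAt_norm_rpow z hp).const_mul (1 / p)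
  have heq : (fun z : ℂ => ‖z‖ ^ p / p) = fun z : ℂ => (1 / p) * ‖z‖ ^ p := by
    funext w; ring
  rw [heq]
  convert h using 1
  · rfl
  · rfl
  · rfl
  ext w
  simp [ContinuousLinearMap.smul_apply]
  field_simp

lemma hasFDerivAt_norm_rpow_ne {z : ℂ} (hz : z ≠ 0) (q : ℝ) :
    HasFDerivAt (fun z : ℂ => ‖z‖ ^ q) ((q * ‖z‖ ^ (q - 2)) • innerSL ℝ z) z := by
  have h2 : HasFDerivAt (fun z : ℂ => ‖z‖ ^ 2) (2 • innerSL ℝ z) z :=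
    (hasStrictFDerivAt_norm_sq z).hasFDerivAt
  have hnz : (0:ℝ) < ‖z‖ := norm_pos_iff.mpr hz
  have hne : ‖z‖ ^ 2 ≠ 0 := by positivity
  have h := h2.rpow_const (p := q / 2) (Or.inl hne)
  convert h using 1
  · rfl
  · funext w
    rw [← Real.rpow_natCast ‖w‖ 2, ← Real.rpow_mul (norm_nonneg w)]
    congr 1
    ring
  · ext w
    simp [ContinuousLinearMap.smul_apply]
    rw [← Real.rpow_natCast ‖z‖ 2, ← Real.rpow_mul (norm_nonneg z)]
    rw [show ((2:ℕ):ℝ) * (q / 2 - 1) = q - 2 by push_cast; ring]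
    ring

lemma hasFDerivAt_G0 {q : ℝ} (hq : 0 < q) (ε : ℂ) :
    HasFDerivAt (fun z : ℂ => ‖z‖ ^ q * (innerSL ℝ ε z)) (0 : ℂ →L[ℝ] ℝ) 0 := by
  rw [hasFDerivAt_iff_isLittleO]
  simp only [map_zero, mul_zero, sub_zero, ContinuousLinearMap.zero_apply, norm_zero]
  rw [Asymptotics.isLittleO_iff]
  intro c hc
  have hcont : ContinuousAt (fun z : ℂ => ‖ε‖ * ‖z‖ ^ q) 0 := by
    fun_prop (discharger := simp [hq.le])
  have h1 : Filter.Tendsto (fun z : ℂ => ‖ε‖ * ‖z‖ ^ q) (nhds 0) (nhds 0) := by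
    simpa [Real.zero_rpow hq.ne'] using hcont.tendsto
  filter_upwards [h1.eventually_le_const hc] with z hz
  have hb : |(innerSL ℝ ε) z| ≤ ‖ε‖ * ‖z‖ := by
    simpa using abs_real_inner_le_norm ε z
  calc ‖‖z‖ ^ q * (innerSL ℝ ε) z‖ = ‖z‖ ^ q * |(innerSL ℝ ε) z| := by
        rw [Real.norm_eq_abs, abs_mul, abs_of_nonneg (Real.rpow_nonneg (norm_nonneg z) q)]
    _ ≤ ‖z‖ ^ q * (‖ε‖ * ‖z‖) := by gcongr
    _ = (‖ε‖ * ‖z‖ ^ q) * ‖z‖ := by ring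
    _ ≤ c * ‖z‖ := by gcongr

lemma taylor2_bound {g g1 g2 g3 : ℝ → ℝ} {M : ℝ}
    (h1 : ∀ t ∈ Icc (0:ℝ) 1, HasDerivWithinAt g (g1 t) (Icc 0 1) t)
    (h2 : ∀ t ∈ Icc (0:ℝ) 1, HasDerivWithinAt g1 (g2 t) (Icc 0 1) t)
    (h3 : ∀ t ∈ Icc (0:ℝ) 1, HasDerivWithinAt g2 (g3 t) (Icc 0 1) t)
    (hM : ∀ t ∈ Icc (0:ℝ) 1, |g3 t| ≤ M) :
    |g 1 - g 0 - g1 0 - g2 0 / 2| ≤ M := by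
  have hconv : Convex ℝ (Icc (0:ℝ) 1) := convex_Icc 0 1
  have h0m : (0:ℝ) ∈ Icc (0:ℝ) 1 := ⟨le_refl 0, zero_le_one⟩
  have h1m : (1:ℝ) ∈ Icc (0:ℝ) 1 := ⟨zero_le_one, le_refl 1⟩
  have hMnn : 0 ≤ M := (abs_nonneg _).trans (hM 0 h0m)
  have step1 : ∀ t ∈ Icc (0:ℝ) 1, |g2 t - g2 0| ≤ M := by
    intro t ht
    have := hconv.norm_image_sub_le_of_norm_hasDerivWithin_le h3
      (fun x hx => by simpa using hM x hx) h0m ht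
    rw [Real.norm_eq_abs, Real.norm_eq_abs, sub_zero] at this
    calc |g2 t - g2 0| ≤ M * |t| := this
      _ ≤ M * 1 := by
          refine mul_le_mul_of_nonneg_left ?_ hMnn
          rw [abs_of_nonneg ht.1]; exact ht.2
      _ = M := mul_one M
  have hk : ∀ t ∈ Icc (0:ℝ) 1,
      HasDerivWithinAt (fun t => g1 t - g1 0 - t * g2 0) (g2 t - g2 0) (Icc 0 1) t := by
    intro t ht
    have := ((h2 t ht).sub_const (g1 0)).sub ((hasDerivWithinAt_id t (Icc 0 1)).mul_const (g2 0))
    simpa [Pi.sub_def] using this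
  have step2 : ∀ t ∈ Icc (0:ℝ) 1, |g1 t - g1 0 - t * g2 0| ≤ M := by
    intro t ht
    have := hconv.norm_image_sub_le_of_norm_hasDerivWithin_le hk
      (fun x hx => by simpa using step1 x hx) h0m ht
    simp only [Real.norm_eq_abs, sub_zero, zero_mul, sub_self, sub_zero] at this
    calc |g1 t - g1 0 - t * g2 0| = |g1 t - g1 0 - t * g2 0 - (g1 0 - g1 0 - 0 * g2 0)| := by
          norm_num
      _ ≤ M * |t - 0| := by
          have := hconv.norm_image_sub_le_of_norm_hasDerivWithin_le hk
            (fun x hx => by simpa using step1 x hx) h0m ht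
          simpa [Real.norm_eq_abs] using this
      _ ≤ M := by
          rw [sub_zero, abs_of_nonneg ht.1]
          nlinarith [ht.2]
  have hh : ∀ t ∈ Icc (0:ℝ) 1,
      HasDerivWithinAt (fun t => g t - g 0 - t * g1 0 - t ^ 2 / 2 * g2 0)
        (g1 t - g1 0 - t * g2 0) (Icc 0 1) t := by
    intro t ht
    have hp : HasDerivWithinAt (fun t : ℝ => t ^ 2 / 2 * g2 0) (t * g2 0) (Icc 0 1) t := by
      have := (((hasDerivWithinAt_id t (Icc (0:ℝ) 1)).pow 2).div_const 2).mul_const (g2 0)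
      convert this using 1
      · rfl
      · rfl
      · rfl
      simp [id_eq]
    have := (((h1 t ht).sub_const (g 0)).sub
      ((hasDerivWithinAt_id t (Icc 0 1)).mul_const (g1 0))).sub hp
    simpa [sub_sub, Pi.sub_def, Pi.add_def] using this
  have final := hconv.norm_image_sub_le_of_norm_hasDerivWithin_le hh
    (fun x hx => by simpa using step2 x hx) h0m h1m
  simp only [Real.norm_eq_abs] at final
  calc |g 1 - g 0 - g1 0 - g2 0 / 2|
      = |(g 1 - g 0 - 1 * g1 0 - 1 ^ 2 / 2 * g2 0) - (g 0 - g 0 - 0 * g1 0 - 0 ^ 2 / 2 * g2 0)| := by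
        congr 1
        ring
    _ ≤ M * |1 - 0| := final
    _ = M := by norm_num


lemma near_bound {α : ℝ} (hα2 : 2 < α) (hα3 : α ≤ 3) {P ε : ℂ} (hlt : 2 * ‖ε‖ < ‖P‖) :
    |‖P + ε‖ ^ α / α - ‖P‖ ^ α / α - ‖P‖ ^ (α - 2) * ⟪ε, P⟫ -
        1 / 2 * (‖P‖ ^ (α - 2) * ⟪ε, ε⟫ + ⟪ε, P⟫ * ((α - 2) * ‖P‖ ^ (α - 4) * ⟪P, ε⟫))|
      ≤ 15 * ‖P‖ ^ (α - 3) * ‖ε‖ ^ 3 := by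
  have hK : (0:ℝ) < ‖P‖ := lt_of_le_of_lt (by positivity) hlt
  have he : (0:ℝ) ≤ ‖ε‖ := norm_nonneg ε
  set a : ℝ := ‖P‖ ^ 2 with ha
  set b : ℝ := ⟪P, ε⟫ with hb
  set c : ℝ := ‖ε‖ ^ 2 with hc
  set u : ℝ → ℝ := fun t => a + 2 * b * t + c * t ^ 2 with hu
  set v : ℝ → ℝ := fun t => 2 * b + 2 * c * t with hv
  have hz : ∀ t : ℝ, u t = ‖P + t • ε‖ ^ 2 := by
    intro t
    rw [norm_add_sq_real, real_inner_smul_right, norm_smul]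
    simp only [hu, ha, hb, hc, Real.norm_eq_abs, mul_pow, sq_abs]
    ring
  have hvz : ∀ t : ℝ, v t = 2 * ⟪P + t • ε, ε⟫ := by
    intro t
    rw [inner_add_left, real_inner_smul_left, real_inner_self_eq_norm_sq]
    simp only [hv, hb, hc]
    ring
  have hs_lb : ∀ t ∈ Icc (0:ℝ) 1, ‖P‖ / 2 ≤ ‖P + t • ε‖ := by
    intro t ht
    have h1 : ‖P‖ ≤ ‖P + t • ε‖ + ‖t • ε‖ := by
      calc ‖P‖ = ‖(P + t • ε) + (-(t • ε))‖ := by congr 1; ring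
        _ ≤ ‖P + t • ε‖ + ‖-(t • ε)‖ := norm_add_le _ _
        _ = ‖P + t • ε‖ + ‖t • ε‖ := by rw [norm_neg]
    have h2 : ‖t • ε‖ ≤ ‖ε‖ := by
      rw [norm_smul, Real.norm_eq_abs, abs_of_nonneg ht.1]
      calc t * ‖ε‖ ≤ 1 * ‖ε‖ := by gcongr; exact ht.2
        _ = ‖ε‖ := one_mul _
    linarith
  have hs_ub : ∀ t ∈ Icc (0:ℝ) 1, ‖P + t • ε‖ ≤ 2 * ‖P‖ := by
    intro t ht
    have h2 : ‖t • ε‖ ≤ ‖ε‖ := by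
      rw [norm_smul, Real.norm_eq_abs, abs_of_nonneg ht.1]
      calc t * ‖ε‖ ≤ 1 * ‖ε‖ := by gcongr; exact ht.2
        _ = ‖ε‖ := one_mul _
    calc ‖P + t • ε‖ ≤ ‖P‖ + ‖t • ε‖ := norm_add_le _ _
      _ ≤ 2 * ‖P‖ := by linarith
  have hu_pos : ∀ t ∈ Icc (0:ℝ) 1, 0 < u t := by
    intro t ht
    rw [hz t]
    have h := hs_lb t ht
    nlinarith
  have hu' : ∀ t : ℝ, HasDerivAt u (v t) t := by
    intro t
    have h := ((hasDerivAt_const t a).add ((hasDerivAt_id' (x := t)).const_mul (2*b))).add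
      ((hasDerivAt_pow 2 t).const_mul c)
    convert h using 1
    · rfl
    · rfl
    · rfl
    simp only [hv]
    push_cast
    ring
  have hv' : ∀ t : ℝ, HasDerivAt v (2*c) t := by
    intro t
    have h := ((hasDerivAt_id' (x := t)).const_mul (2*c)).const_add (2*b)
    convert h using 1
    · rfl
    · rfl
    ring
  have hw : ∀ q : ℝ, ∀ t ∈ Icc (0:ℝ) 1,
      HasDerivAt (fun t => u t ^ q) (v t * q * u t ^ (q-1)) t := by
    intro q t ht
    exact (hu' t).rpow_const (Or.inl (hu_pos t ht).ne')
  set g : ℝ → ℝ := fun t => u t ^ (α/2) with hg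
  set g1 : ℝ → ℝ := fun t => v t * (α/2) * u t ^ (α/2 - 1) with hg1
  set g2 : ℝ → ℝ := fun t => 2*c*(α/2) * u t ^ (α/2-1)
      + v t * (α/2) * (v t * (α/2-1) * u t ^ (α/2-1-1)) with hg2
  set g3 : ℝ → ℝ := fun t => 2*c*(α/2) * (v t * (α/2-1) * u t ^ (α/2-1-1))
      + (2*c*(α/2) * (v t * (α/2-1) * u t ^ (α/2-1-1))
        + v t * (α/2) * (2*c*(α/2-1) * u t ^ (α/2-1-1)
            + v t * (α/2-1) * (v t * (α/2-1-1) * u t ^ (α/2-1-1-1)))) with hg3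
  have hd1 : ∀ t ∈ Icc (0:ℝ) 1, HasDerivWithinAt g (g1 t) (Icc 0 1) t :=
    fun t ht => (hw (α/2) t ht).hasDerivWithinAt
  have hd2 : ∀ t ∈ Icc (0:ℝ) 1, HasDerivWithinAt g1 (g2 t) (Icc 0 1) t := by
    intro t ht
    exact (((hv' t).mul_const (α/2)).mul (hw (α/2-1) t ht)).hasDerivWithinAt
  have hd3 : ∀ t ∈ Icc (0:ℝ) 1, HasDerivWithinAt g2 (g3 t) (Icc 0 1) t := by
    intro t ht
    have hA := (hw (α/2-1) t ht).const_mul (2*c*(α/2))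
    have hG := ((hv' t).mul_const (α/2-1)).mul (hw (α/2-1-1) t ht)
    have hB := ((hv' t).mul_const (α/2)).mul hG
    exact (hA.add hB).hasDerivWithinAt
  have hcnn : (0:ℝ) ≤ c := by rw [hc]; positivity
  clear_value a b c u v g g1 g2 g3
  have hMb : ∀ t ∈ Icc (0:ℝ) 1, |g3 t| ≤ 30 * ‖P‖ ^ (α-3) * ‖ε‖ ^ 3 := by
    intro t ht
    set s : ℝ := ‖P + t • ε‖ with hs
    have hsK : ‖P‖/2 ≤ s := hs_lb t ht
    have hs0 : (0:ℝ) < s := lt_of_lt_of_le (by positivity) hsK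
    have hsdef := hs
    clear_value s
    clear hd1 hd2 hd3 hw hu' hv' hg hg1 hg2 hu hv hb ha hu_pos hs_lb hs_ub
    have hc2 : (0:ℝ) ≤ 2*c := by linarith
    have hup : ∀ q : ℝ, u t ^ q = s ^ (2*q) := by
      intro q
      rw [hz t, ← hs, ← Real.rpow_natCast s 2, ← Real.rpow_mul hs0.le]
      norm_num
    have hu2 : u t ^ (α/2-1-1) = s ^ (α-4) := by rw [hup, show 2*(α/2-1-1) = α-4 by ring]
    have hu3 : u t ^ (α/2-1-1-1) = s ^ (α-6) := by rw [hup, show 2*(α/2-1-1-1) = α-6 by ring]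
    have hvb : |v t| ≤ 2 * (s * ‖ε‖) := by
      rw [hvz t, abs_mul]
      have h := abs_real_inner_le_norm (P + t • ε) ε
      rw [← hs] at h
      calc |(2:ℝ)| * |⟪P + t • ε, ε⟫| = 2 * |⟪P + t • ε, ε⟫| := by norm_num
        _ ≤ 2 * (s * ‖ε‖) := by linarith
    have hsa : s * s ^ (α-4) = s ^ (α-3) := by
      rw [show α-3 = 1+(α-4) by ring, Real.rpow_add hs0, Real.rpow_one]
    have hsb : s * s ^ (α-6) = s ^ (α-5) := by
      rw [show α-5 = 1+(α-6) by ring, Real.rpow_add hs0, Real.rpow_one]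
    have hsc : s * s ^ (α-5) = s ^ (α-4) := by
      rw [show α-4 = 1+(α-5) by ring, Real.rpow_add hs0, Real.rpow_one]
    have hr3 : (0:ℝ) ≤ s ^ (α-3) := Real.rpow_nonneg hs0.le _
    have hr4 : (0:ℝ) ≤ s ^ (α-4) := Real.rpow_nonneg hs0.le _
    have hr5 : (0:ℝ) ≤ s ^ (α-5) := Real.rpow_nonneg hs0.le _
    have hr6 : (0:ℝ) ≤ s ^ (α-6) := Real.rpow_nonneg hs0.le _
    have hGb : |v t * (α/2-1) * u t ^ (α/2-1-1)| ≤ ‖ε‖ * s ^ (α-3) := by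
      rw [hu2, abs_mul, abs_mul, abs_of_nonneg (by linarith : (0:ℝ) ≤ α/2-1),
        abs_of_nonneg hr4]
      calc |v t| * (α/2-1) * s ^ (α-4) ≤ (2 * (s * ‖ε‖)) * (1/2) * s ^ (α-4) := by
            refine mul_le_mul_of_nonneg_right ?_ hr4
            exact mul_le_mul hvb (by linarith) (by linarith) (by positivity)
        _ = ‖ε‖ * (s * s ^ (α-4)) := by ring
        _ = ‖ε‖ * s ^ (α-3) := by rw [hsa]
    have hG'b : |2*c*(α/2-1) * u t ^ (α/2-1-1)
        + v t * (α/2-1) * (v t * (α/2-1-1) * u t ^ (α/2-1-1-1))| ≤ 3 * (‖ε‖^2 * s ^ (α-4)) := by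
      have h1 : |2*c*(α/2-1) * u t ^ (α/2-1-1)| ≤ ‖ε‖^2 * s ^ (α-4) := by
        rw [hu2, abs_mul, abs_of_nonneg (mul_nonneg hc2 (by linarith) : (0:ℝ) ≤ 2*c*(α/2-1)),
          abs_of_nonneg hr4]
        calc 2*c*(α/2-1) * s ^ (α-4) ≤ 2*c*(1/2) * s ^ (α-4) := by
              refine mul_le_mul_of_nonneg_right (mul_le_mul_of_nonneg_left (by linarith) hc2) hr4
          _ = c * s ^ (α-4) := by ring
          _ = ‖ε‖^2 * s ^ (α-4) := by rw [hc]
      have h2 : |v t * (α/2-1-1) * u t ^ (α/2-1-1-1)| ≤ 2 * (‖ε‖ * s ^ (α-5)) := by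
        rw [hu3, abs_mul, abs_mul, abs_of_nonneg hr6]
        have habs1 : |α/2-1-1| ≤ 1 := by rw [abs_le]; constructor <;> linarith
        calc |v t| * |α/2-1-1| * s ^ (α-6) ≤ (2 * (s * ‖ε‖)) * 1 * s ^ (α-6) := by
              refine mul_le_mul_of_nonneg_right ?_ hr6
              exact mul_le_mul hvb habs1 (abs_nonneg _) (by positivity)
          _ = 2 * (‖ε‖ * (s * s ^ (α-6))) := by ring
          _ = 2 * (‖ε‖ * s ^ (α-5)) := by rw [hsb]
      have h3 : |v t * (α/2-1) * (v t * (α/2-1-1) * u t ^ (α/2-1-1-1))| ≤ 2 * (‖ε‖^2 * s ^ (α-4)) := by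
        rw [abs_mul, abs_mul, abs_of_nonneg (by linarith : (0:ℝ) ≤ α/2-1)]
        calc |v t| * (α/2-1) * |v t * (α/2-1-1) * u t ^ (α/2-1-1-1)|
            ≤ (2 * (s * ‖ε‖)) * (1/2) * (2 * (‖ε‖ * s ^ (α-5))) := by
              refine mul_le_mul ?_ h2 (abs_nonneg _) (by positivity)
              exact mul_le_mul hvb (by linarith) (by linarith) (by positivity)
          _ = 2 * (‖ε‖^2 * (s * s ^ (α-5))) := by ring
          _ = 2 * (‖ε‖^2 * s ^ (α-4)) := by rw [hsc]
      calc |2*c*(α/2-1) * u t ^ (α/2-1-1)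
            + v t * (α/2-1) * (v t * (α/2-1-1) * u t ^ (α/2-1-1-1))|
          ≤ |2*c*(α/2-1) * u t ^ (α/2-1-1)|
            + |v t * (α/2-1) * (v t * (α/2-1-1) * u t ^ (α/2-1-1-1))| := abs_add_le _ _
        _ ≤ ‖ε‖^2 * s ^ (α-4) + 2 * (‖ε‖^2 * s ^ (α-4)) := by linarith
        _ = 3 * (‖ε‖^2 * s ^ (α-4)) := by ring
    have hT1 : |2*c*(α/2) * (v t * (α/2-1) * u t ^ (α/2-1-1))| ≤ 3 * (‖ε‖^3 * s ^ (α-3)) := by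
      rw [abs_mul, abs_of_nonneg (mul_nonneg hc2 (by linarith) : (0:ℝ) ≤ 2*c*(α/2))]
      calc 2*c*(α/2) * |v t * (α/2-1) * u t ^ (α/2-1-1)|
          ≤ (2*c*(3/2)) * (‖ε‖ * s ^ (α-3)) := by
            refine mul_le_mul (mul_le_mul_of_nonneg_left (by linarith) hc2) hGb (abs_nonneg _) (by linarith)
        _ = 3 * ((c * ‖ε‖) * s ^ (α-3)) := by ring
        _ = 3 * (‖ε‖^3 * s ^ (α-3)) := by rw [hc]; ring
    have hT3 : |v t * (α/2) * (2*c*(α/2-1) * u t ^ (α/2-1-1)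
        + v t * (α/2-1) * (v t * (α/2-1-1) * u t ^ (α/2-1-1-1)))| ≤ 9 * (‖ε‖^3 * s ^ (α-3)) := by
      rw [abs_mul, abs_mul, abs_of_nonneg (by linarith : (0:ℝ) ≤ α/2)]
      calc |v t| * (α/2) * |2*c*(α/2-1) * u t ^ (α/2-1-1)
            + v t * (α/2-1) * (v t * (α/2-1-1) * u t ^ (α/2-1-1-1))|
          ≤ (2 * (s * ‖ε‖)) * (3/2) * (3 * (‖ε‖^2 * s ^ (α-4))) := by
            refine mul_le_mul ?_ hG'b (abs_nonneg _) (by positivity)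
            exact mul_le_mul hvb (by linarith) (by linarith) (by positivity)
        _ = 9 * (‖ε‖^3 * (s * s ^ (α-4))) := by ring
        _ = 9 * (‖ε‖^3 * s ^ (α-3)) := by rw [hsa]
    have hsP : s ^ (α-3) ≤ 2 * ‖P‖ ^ (α-3) := by
      have h1 : s ^ (α-3) ≤ (‖P‖/2) ^ (α-3) :=
        Real.rpow_le_rpow_of_nonpos (by positivity) hsK (by linarith)
      have h2 : (‖P‖/2) ^ (α-3) = ‖P‖ ^ (α-3) / 2 ^ (α-3) :=
        Real.div_rpow (norm_nonneg P) (by norm_num) (α-3)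
      have h4 : (2:ℝ) ^ (-1:ℝ) = 1/2 := by
        rw [show (-1:ℝ) = -(1:ℝ) by norm_num, Real.rpow_neg (by norm_num), Real.rpow_one]
        norm_num
      have h3 : (1:ℝ)/2 ≤ 2 ^ (α-3) := by
        rw [← h4]
        exact Real.rpow_le_rpow_of_exponent_le one_le_two (by linarith)
      have h5 : ‖P‖ ^ (α-3) / 2 ^ (α-3) ≤ ‖P‖ ^ (α-3) / (1/2) := by
        exact div_le_div_of_nonneg_left (Real.rpow_nonneg (norm_nonneg P) _) (by norm_num) h3
      calc s ^ (α-3) ≤ ‖P‖ ^ (α-3) / 2 ^ (α-3) := by rw [← h2]; exact h1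
        _ ≤ ‖P‖ ^ (α-3) / (1/2) := h5
        _ = 2 * ‖P‖ ^ (α-3) := by ring
    calc |g3 t| ≤ |2*c*(α/2) * (v t * (α/2-1) * u t ^ (α/2-1-1))|
          + (|2*c*(α/2) * (v t * (α/2-1) * u t ^ (α/2-1-1))|
            + |v t * (α/2) * (2*c*(α/2-1) * u t ^ (α/2-1-1)
              + v t * (α/2-1) * (v t * (α/2-1-1) * u t ^ (α/2-1-1-1)))|) := by
          rw [hg3]
          exact (abs_add_le _ _).trans (by gcongr; exact abs_add_le _ _)
      _ ≤ 3 * (‖ε‖^3 * s ^ (α-3)) + (3 * (‖ε‖^3 * s ^ (α-3)) + 9 * (‖ε‖^3 * s ^ (α-3))) := by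
          linarith
      _ = 15 * (‖ε‖^3 * s ^ (α-3)) := by ring
      _ ≤ 15 * (‖ε‖^3 * (2 * ‖P‖ ^ (α-3))) := by
          refine mul_le_mul_of_nonneg_left ?_ (by norm_num)
          exact mul_le_mul_of_nonneg_left hsP (by positivity)
      _ = 30 * ‖P‖ ^ (α-3) * ‖ε‖ ^ 3 := by ring
  have hT := taylor2_bound hd1 hd2 hd3 hMb
  have hu0 : u 0 = a := by rw [hu]; norm_num
  have hv0 : v 0 = 2*b := by rw [hv]; norm_num
  have haq : ∀ q : ℝ, a ^ q = ‖P‖ ^ (2*q) := by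
    intro q
    rw [ha, ← Real.rpow_natCast ‖P‖ 2, ← Real.rpow_mul (norm_nonneg _)]
    norm_num
  have hg0 : g 0 = ‖P‖ ^ α := by
    have h1 : g 0 = u 0 ^ (α/2) := by rw [hg]
    rw [h1, hu0, haq, show 2*(α/2) = α by ring]
  have hg11 : g 1 = ‖P + ε‖ ^ α := by
    have h1 : g 1 = u 1 ^ (α/2) := by rw [hg]
    have h2 : u 1 = ‖P + ε‖ ^ 2 := by rw [hz 1, one_smul]
    rw [h1, h2, ← Real.rpow_natCast ‖P + ε‖ 2, ← Real.rpow_mul (norm_nonneg _),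
      show ((2:ℕ):ℝ)*(α/2) = α by push_cast; ring]
  have hg10 : g1 0 = α * (b * ‖P‖ ^ (α-2)) := by
    have h1 : g1 0 = v 0 * (α/2) * u 0 ^ (α/2-1) := by rw [hg1]
    rw [h1, hv0, hu0, haq, show 2*(α/2-1) = α-2 by ring]
    ring
  have hg20 : g2 0 = α * (c * ‖P‖ ^ (α-2)) + α*(α-2) * (b^2 * ‖P‖ ^ (α-4)) := by
    have h1 : g2 0 = 2*c*(α/2) * u 0 ^ (α/2-1) + v 0 * (α/2) * (v 0 * (α/2-1) * u 0 ^ (α/2-1-1)) := by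
      rw [hg2]
    rw [h1, hv0, hu0]
    simp only [haq]
    rw [show 2*(α/2-1) = α-2 by ring, show 2*(α/2-1-1) = α-4 by ring]
    ring
  have hbe : ⟪ε, P⟫ = b := by rw [hb]; exact real_inner_comm P ε
  have hce : ⟪ε, ε⟫ = c := by rw [hc]; exact real_inner_self_eq_norm_sq ε
  have hα0 : (0:ℝ) < α := by linarith
  have hXT : ‖P + ε‖ ^ α / α - ‖P‖ ^ α / α - ‖P‖ ^ (α - 2) * ⟪ε, P⟫ -
      1 / 2 * (‖P‖ ^ (α - 2) * ⟪ε, ε⟫ + ⟪ε, P⟫ * ((α - 2) * ‖P‖ ^ (α - 4) * b))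
      = (g 1 - g 0 - g1 0 - g2 0 / 2) / α := by
    rw [hg11, hg0, hg10, hg20, hbe, hce]
    field_simp
  rw [hXT, abs_div, abs_of_pos hα0]
  calc |g 1 - g 0 - g1 0 - g2 0 / 2| / α ≤ |g 1 - g 0 - g1 0 - g2 0 / 2| / 2 :=
        div_le_div_of_nonneg_left (abs_nonneg _) (by norm_num) (by linarith)
    _ ≤ (30 * ‖P‖ ^ (α-3) * ‖ε‖ ^ 3) / 2 := by linarith
    _ = 15 * ‖P‖ ^ (α - 3) * ‖ε‖ ^ 3 := by ring

lemma abs_sub4 (a b c d : ℝ) : |a - b - c - d| ≤ |a| + |b| + |c| + |d| := by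
  have h1 : |a - b| ≤ |a| + |b| := by
    calc |a - b| = |a + -b| := by rw [sub_eq_add_neg]
      _ ≤ |a| + |-b| := abs_add_le _ _
      _ = |a| + |b| := by rw [abs_neg]
  have h2 : |a - b - c| ≤ |a| + |b| + |c| := by
    calc |a - b - c| = |(a - b) + -c| := by rw [sub_eq_add_neg]
      _ ≤ |a - b| + |-c| := abs_add_le _ _
      _ ≤ |a| + |b| + |c| := by rw [abs_neg]; linarith
  calc |a - b - c - d| = |(a - b - c) + -d| := by rw [sub_eq_add_neg]
    _ ≤ |a - b - c| + |-d| := abs_add_le _ _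
    _ ≤ |a| + |b| + |c| + |d| := by rw [abs_neg]; linarith

lemma far_bound {α : ℝ} (hα2 : 2 < α) (hα3 : α ≤ 3) {P ε : ℂ} (hge : ‖P‖ ≤ 2 * ‖ε‖) :
    |‖P + ε‖ ^ α / α - ‖P‖ ^ α / α - ‖P‖ ^ (α - 2) * ⟪ε, P⟫ -
        1 / 2 * (‖P‖ ^ (α - 2) * ⟪ε, ε⟫ + ⟪ε, P⟫ * ((α - 2) * ‖P‖ ^ (α - 4) * ⟪P, ε⟫))|
      ≤ 41 * ‖ε‖ ^ α := by
  have hα0 : (0:ℝ) < α := by linarith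
  rcases eq_or_ne ε 0 with rfl | he0
  · have hP : P = 0 := by
      have h : ‖P‖ ≤ 0 := by simpa using hge
      exact norm_le_zero_iff.mp h
    subst hP
    simp [Real.zero_rpow hα0.ne']
  · have he : (0:ℝ) < ‖ε‖ := norm_pos_iff.mpr he0
    have hεα : (0:ℝ) ≤ ‖ε‖ ^ α := Real.rpow_nonneg he.le α
    have hεsplit : ‖ε‖ ^ (α-2) * ‖ε‖ ^ (2:ℕ) = ‖ε‖ ^ α := by
      rw [← Real.rpow_natCast ‖ε‖ 2, ← Real.rpow_add he]
      norm_num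
    have hKsplit : ‖P‖ ^ (α-4) * ‖P‖ ^ (2:ℕ) = ‖P‖ ^ (α-2) := by
      rw [← Real.rpow_natCast ‖P‖ 2, ← Real.rpow_add' (norm_nonneg P) (by push_cast; intro h; linarith)]
      congr 1
      push_cast
      ring
    have h2b : (2:ℝ) ^ (α-2) ≤ 2 := by
      calc (2:ℝ) ^ (α-2) ≤ 2 ^ (1:ℝ) := Real.rpow_le_rpow_of_exponent_le one_le_two (by linarith)
        _ = 2 := Real.rpow_one 2
    have h2c : (2:ℝ) ^ (α-1) ≤ 4 := by
      calc (2:ℝ) ^ (α-1) ≤ 2 ^ (2:ℝ) := Real.rpow_le_rpow_of_exponent_le one_le_two (by linarith)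
        _ = 4 := by
          rw [show (2:ℝ) = ((2:ℕ):ℝ) by norm_num, Real.rpow_natCast]
          norm_num
    have hKe : ‖P‖ ^ (α-2) ≤ (2*‖ε‖) ^ (α-2) :=
      Real.rpow_le_rpow (norm_nonneg P) hge (by linarith)
    have h2e : (2*‖ε‖) ^ (α-2) = 2 ^ (α-2) * ‖ε‖ ^ (α-2) := Real.mul_rpow (by norm_num) he.le
    have t1 : |‖P + ε‖ ^ α / α| ≤ 27 * ‖ε‖ ^ α := by
      rw [abs_of_nonneg (by positivity)]
      have hb : ‖P + ε‖ ≤ 3 * ‖ε‖ := by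
        calc ‖P + ε‖ ≤ ‖P‖ + ‖ε‖ := norm_add_le _ _
          _ ≤ 3 * ‖ε‖ := by linarith
      have h4 : (3:ℝ) ^ α ≤ 27 := by
        calc (3:ℝ) ^ α ≤ 3 ^ (3:ℝ) := Real.rpow_le_rpow_of_exponent_le (by norm_num) hα3
          _ = 27 := by
            rw [show (3:ℝ) = ((3:ℕ):ℝ) by norm_num, Real.rpow_natCast]
            norm_num
      calc ‖P + ε‖ ^ α / α ≤ ‖P + ε‖ ^ α := div_le_self (Real.rpow_nonneg (norm_nonneg _) _) (by linarith)
        _ ≤ (3 * ‖ε‖) ^ α := Real.rpow_le_rpow (norm_nonneg _) hb hα0.le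
        _ = 3 ^ α * ‖ε‖ ^ α := Real.mul_rpow (by norm_num) he.le
        _ ≤ 27 * ‖ε‖ ^ α := mul_le_mul_of_nonneg_right h4 hεα
    have t2 : |‖P‖ ^ α / α| ≤ 8 * ‖ε‖ ^ α := by
      rw [abs_of_nonneg (by positivity)]
      have h4 : (2:ℝ) ^ α ≤ 8 := by
        calc (2:ℝ) ^ α ≤ 2 ^ (3:ℝ) := Real.rpow_le_rpow_of_exponent_le (by norm_num) hα3
          _ = 8 := by
            rw [show (3:ℝ) = ((3:ℕ):ℝ) by norm_num, Real.rpow_natCast]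
            norm_num
      calc ‖P‖ ^ α / α ≤ ‖P‖ ^ α := div_le_self (Real.rpow_nonneg (norm_nonneg _) _) (by linarith)
        _ ≤ (2 * ‖ε‖) ^ α := Real.rpow_le_rpow (norm_nonneg _) hge hα0.le
        _ = 2 ^ α * ‖ε‖ ^ α := Real.mul_rpow (by norm_num) he.le
        _ ≤ 8 * ‖ε‖ ^ α := mul_le_mul_of_nonneg_right h4 hεα
    have t3 : |‖P‖ ^ (α - 2) * ⟪ε, P⟫| ≤ 4 * ‖ε‖ ^ α := by
      rw [abs_mul, abs_of_nonneg (Real.rpow_nonneg (norm_nonneg P) _)]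
      have hip : |⟪ε, P⟫| ≤ ‖ε‖ * (2 * ‖ε‖) := by
        calc |⟪ε, P⟫| ≤ ‖ε‖ * ‖P‖ := abs_real_inner_le_norm ε P
          _ ≤ ‖ε‖ * (2 * ‖ε‖) := by nlinarith
      calc ‖P‖ ^ (α-2) * |⟪ε, P⟫| ≤ (2 ^ (α-2) * ‖ε‖ ^ (α-2)) * (‖ε‖ * (2 * ‖ε‖)) := by
            refine mul_le_mul (by rw [← h2e]; exact hKe) hip (abs_nonneg _) (by positivity)
        _ = (2 ^ (α-2) * 2) * (‖ε‖ ^ (α-2) * ‖ε‖ ^ (2:ℕ)) := by ring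
        _ = (2 ^ (α-2) * 2) * ‖ε‖ ^ α := by rw [hεsplit]
        _ ≤ 4 * ‖ε‖ ^ α := by
            refine mul_le_mul_of_nonneg_right ?_ hεα
            nlinarith [Real.rpow_nonneg (by norm_num : (0:ℝ) ≤ 2) (α-2)]
    have t4 : |1 / 2 * (‖P‖ ^ (α - 2) * ⟪ε, ε⟫ + ⟪ε, P⟫ * ((α - 2) * ‖P‖ ^ (α - 4) * ⟪P, ε⟫))|
        ≤ 2 * ‖ε‖ ^ α := by
      have hA : |‖P‖ ^ (α - 2) * ⟪ε, ε⟫| ≤ 2 * ‖ε‖ ^ α := by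
        rw [real_inner_self_eq_norm_sq, abs_mul, abs_of_nonneg (Real.rpow_nonneg (norm_nonneg P) _),
          abs_of_nonneg (by positivity : (0:ℝ) ≤ ‖ε‖ ^ 2)]
        calc ‖P‖ ^ (α-2) * ‖ε‖ ^ 2 ≤ (2 ^ (α-2) * ‖ε‖ ^ (α-2)) * ‖ε‖ ^ 2 := by
              refine mul_le_mul_of_nonneg_right (by rw [← h2e]; exact hKe) (by positivity)
          _ = 2 ^ (α-2) * (‖ε‖ ^ (α-2) * ‖ε‖ ^ (2:ℕ)) := by ring
          _ = 2 ^ (α-2) * ‖ε‖ ^ α := by rw [hεsplit]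
          _ ≤ 2 * ‖ε‖ ^ α := mul_le_mul_of_nonneg_right h2b hεα
      have hB : |⟪ε, P⟫ * ((α - 2) * ‖P‖ ^ (α - 4) * ⟪P, ε⟫)| ≤ 2 * ‖ε‖ ^ α := by
        rw [abs_mul, abs_mul, abs_mul, abs_of_nonneg (by linarith : (0:ℝ) ≤ α - 2),
          abs_of_nonneg (Real.rpow_nonneg (norm_nonneg P) _)]
        have hip1 : |⟪ε, P⟫| ≤ ‖ε‖ * ‖P‖ := abs_real_inner_le_norm ε P
        have hip2 : |⟪P, ε⟫| ≤ ‖P‖ * ‖ε‖ := abs_real_inner_le_norm P ε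
        calc |⟪ε, P⟫| * ((α-2) * ‖P‖ ^ (α-4) * |⟪P, ε⟫|)
            ≤ (‖ε‖ * ‖P‖) * ((α-2) * ‖P‖ ^ (α-4) * (‖P‖ * ‖ε‖)) := by
              refine mul_le_mul hip1 ?_
                (mul_nonneg (mul_nonneg (by linarith) (Real.rpow_nonneg (norm_nonneg P) _)) (abs_nonneg _))
                (by positivity)
              refine mul_le_mul_of_nonneg_left hip2 ?_
              have := Real.rpow_nonneg (norm_nonneg P) (α-4)
              nlinarith
          _ = (α-2) * (‖P‖ ^ (α-4) * ‖P‖ ^ (2:ℕ)) * ‖ε‖ ^ 2 := by ring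
          _ = (α-2) * ‖P‖ ^ (α-2) * ‖ε‖ ^ 2 := by rw [hKsplit]
          _ ≤ 1 * (2 ^ (α-2) * ‖ε‖ ^ (α-2)) * ‖ε‖ ^ 2 := by
              refine mul_le_mul_of_nonneg_right ?_ (by positivity)
              refine mul_le_mul (by linarith) (by rw [← h2e]; exact hKe)
                (Real.rpow_nonneg (norm_nonneg P) _) (by norm_num)
          _ = 2 ^ (α-2) * (‖ε‖ ^ (α-2) * ‖ε‖ ^ (2:ℕ)) := by ring
          _ = 2 ^ (α-2) * ‖ε‖ ^ α := by rw [hεsplit]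
          _ ≤ 2 * ‖ε‖ ^ α := mul_le_mul_of_nonneg_right h2b hεα
      calc |1 / 2 * (‖P‖ ^ (α - 2) * ⟪ε, ε⟫ + ⟪ε, P⟫ * ((α - 2) * ‖P‖ ^ (α - 4) * ⟪P, ε⟫))|
          = 1/2 * |‖P‖ ^ (α - 2) * ⟪ε, ε⟫ + ⟪ε, P⟫ * ((α - 2) * ‖P‖ ^ (α - 4) * ⟪P, ε⟫)| := by
            rw [abs_mul]
            norm_num
        _ ≤ 1/2 * (|‖P‖ ^ (α - 2) * ⟪ε, ε⟫| + |⟪ε, P⟫ * ((α - 2) * ‖P‖ ^ (α - 4) * ⟪P, ε⟫)|) := by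
            have := abs_add_le (‖P‖ ^ (α - 2) * ⟪ε, ε⟫) (⟪ε, P⟫ * ((α - 2) * ‖P‖ ^ (α - 4) * ⟪P, ε⟫))
            linarith
        _ ≤ 2 * ‖ε‖ ^ α := by linarith
    calc |‖P + ε‖ ^ α / α - ‖P‖ ^ α / α - ‖P‖ ^ (α - 2) * ⟪ε, P⟫ -
          1 / 2 * (‖P‖ ^ (α - 2) * ⟪ε, ε⟫ + ⟪ε, P⟫ * ((α - 2) * ‖P‖ ^ (α - 4) * ⟪P, ε⟫))|
        ≤ |‖P + ε‖ ^ α / α| + |‖P‖ ^ α / α| + |‖P‖ ^ (α - 2) * ⟪ε, P⟫| +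
          |1 / 2 * (‖P‖ ^ (α - 2) * ⟪ε, ε⟫ + ⟪ε, P⟫ * ((α - 2) * ‖P‖ ^ (α - 4) * ⟪P, ε⟫))| :=
          abs_sub4 _ _ _ _
      _ ≤ 41 * ‖ε‖ ^ α := by linarith

/-- for N ≥ 4, for all P, ε ∈ ℂ,
|F(P+ε) - F(P) - dF(P)(ε) - ½d²F(P)(ε,ε)| ≲ |ε|^{4/N+2} + |P|^{4/N-1}|ε|³·𝟙_{2|ε|<|P|};
in particular on {2|ε| ≥ |P|} the remainder is ≲ |ε|^{4/N+2}, and on {2|ε| < |P|}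
it is ≲ |P|^{4/N-1}|ε|³ ≲ |ε|^{4/N+2}. -/
theorem stmt15 (N : ℕ) (hN : 4 ≤ N) :
    ∃ C > (0 : ℝ), (∀ P ε : ℂ,
      |FNL N (P + ε) - FNL N P - fderiv ℝ (FNL N) P ε -
          (1 / 2) * fderiv ℝ (fun z => fderiv ℝ (FNL N) z ε) P ε|
        ≤ C * (‖ε‖ ^ ((4 : ℝ) / N + 2) +
            (if 2 * ‖ε‖ < ‖P‖ then
              ‖P‖ ^ ((4 : ℝ) / N - 1) * ‖ε‖ ^ 3 else 0))) ∧
    (∀ P ε : ℂ, 2 * ‖ε‖ < ‖P‖ →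
      ‖P‖ ^ ((4 : ℝ) / N - 1) * ‖ε‖ ^ 3
        ≤ C * ‖ε‖ ^ ((4 : ℝ) / N + 2)) := by
  have hNr : (4:ℝ) ≤ (N:ℝ) := by exact_mod_cast hN
  have hN0 : (0:ℝ) < (N:ℝ) := by linarith
  set α : ℝ := 2 + (4:ℝ)/N with hαdef
  have hdiv_pos : 0 < (4:ℝ)/N := by positivity
  have hdiv_le : (4:ℝ)/N ≤ 1 := by rw [div_le_one hN0]; linarith
  have hα2 : 2 < α := by rw [hαdef]; linarith
  have hα3 : α ≤ 3 := by rw [hαdef]; linarith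
  have hα1 : 1 < α := by linarith
  have hα0 : (0:ℝ) < α := by linarith
  have e1 : (4:ℝ)/N + 2 = α := by rw [hαdef]; ring
  have e2 : (4:ℝ)/N - 1 = α - 3 := by rw [hαdef]; ring
  have hFz : ∀ z : ℂ, FNL N z = ‖z‖ ^ α / α := fun z => rfl
  have hfder1 : ∀ z w : ℂ, fderiv ℝ (FNL N) z w = ‖z‖ ^ (α - 2) * ⟪w, z⟫ := by
    intro z w
    have hF : FNL N = fun z : ℂ => ‖z‖ ^ α / α := funext hFz
    rw [hF, (hasFDerivAt_Fp hα1 z).fderiv, ContinuousLinearMap.smul_apply, innerSL_apply_apply,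
      smul_eq_mul, real_inner_comm w z]
  have hDval : ∀ P ε : ℂ, fderiv ℝ (fun z => fderiv ℝ (FNL N) z ε) P ε
      = ‖P‖ ^ (α - 2) * ⟪ε, ε⟫ + ⟪ε, P⟫ * ((α - 2) * ‖P‖ ^ (α - 4) * ⟪P, ε⟫) := by
    intro P ε
    have hfun : (fun z : ℂ => fderiv ℝ (FNL N) z ε) = fun z : ℂ => ‖z‖ ^ (α-2) * (innerSL ℝ ε z) := by
      funext z
      rw [hfder1 z ε, innerSL_apply_apply]
    rw [hfun]
    rcases eq_or_ne P 0 with rfl | hP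
    · rw [(hasFDerivAt_G0 (by linarith : (0:ℝ) < α - 2) ε).fderiv]
      simp [Real.zero_rpow (show α - 2 ≠ 0 by intro h; linarith)]
    · erw [((hasFDerivAt_norm_rpow_ne hP (α-2)).mul (innerSL ℝ ε).hasFDerivAt).fderiv,
        show α - 2 - 2 = α - 4 by ring]
      simp only [ContinuousLinearMap.add_apply, ContinuousLinearMap.smul_apply,
        ContinuousLinearMap.coe_smul', Pi.smul_apply, innerSL_apply_apply, smul_eq_mul]
  refine ⟨64, by norm_num, ?_, ?_⟩
  · intro P ε
    rw [hDval P ε, hfder1 P ε, hFz (P + ε), hFz P]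
    rw [e1, e2]
    by_cases hlt : 2 * ‖ε‖ < ‖P‖
    · rw [if_pos hlt]
      refine le_trans (near_bound hα2 hα3 hlt) ?_
      have h1 : (0:ℝ) ≤ ‖ε‖ ^ α := Real.rpow_nonneg (norm_nonneg _) _
      have h2 : (0:ℝ) ≤ ‖P‖ ^ (α-3) * ‖ε‖ ^ 3 := by positivity
      nlinarith
    · rw [if_neg hlt]
      refine le_trans (far_bound hα2 hα3 (not_lt.mp hlt)) ?_
      have h1 : (0:ℝ) ≤ ‖ε‖ ^ α := Real.rpow_nonneg (norm_nonneg _) _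
      linarith
  · intro P ε hlt
    rw [e1, e2]
    rcases eq_or_ne ε 0 with rfl | he0
    · simp [Real.zero_rpow hα0.ne']
    · have he : (0:ℝ) < ‖ε‖ := norm_pos_iff.mpr he0
      have h1 : ‖P‖ ^ (α-3) ≤ (2*‖ε‖) ^ (α-3) :=
        Real.rpow_le_rpow_of_nonpos (by positivity) hlt.le (by linarith)
      have h2 : (2*‖ε‖) ^ (α-3) = 2 ^ (α-3) * ‖ε‖ ^ (α-3) := Real.mul_rpow (by norm_num) he.le
      have h3 : (2:ℝ) ^ (α-3) ≤ 1 := Real.rpow_le_one_of_one_le_of_nonpos one_le_two (by linarith)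
      have h4 : ‖ε‖ ^ (α-3) * ‖ε‖ ^ (3:ℕ) = ‖ε‖ ^ α := by
        rw [← Real.rpow_natCast ‖ε‖ 3, ← Real.rpow_add he]
        norm_num
      calc ‖P‖ ^ (α-3) * ‖ε‖ ^ 3 ≤ (2 ^ (α-3) * ‖ε‖ ^ (α-3)) * ‖ε‖ ^ 3 := by
            refine mul_le_mul_of_nonneg_right ?_ (by positivity)
            rw [← h2]
            exact h1
        _ = 2 ^ (α-3) * (‖ε‖ ^ (α-3) * ‖ε‖ ^ (3:ℕ)) := by ring
        _ = 2 ^ (α-3) * ‖ε‖ ^ α := by rw [h4]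
        _ ≤ 1 * ‖ε‖ ^ α := mul_le_mul_of_nonneg_right h3 (Real.rpow_nonneg he.le _)
        _ ≤ 64 * ‖ε‖ ^ α := by nlinarith [Real.rpow_nonneg he.le α]
end
end
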